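/- Let Y = {y_1, ..., y_n} be a set of variables, let a, b be distinct letters of A, let U, V be words over Y ∪ A, and let k > |U| + |V|. Define the substitution h by h(y_i) = a·b^{k+i}·a. Then h(U) = h(V) if and only if U and V are identical as words over Y ∪ A. -/
import Mathlib

/-- The substitution sending a constant `c` to itself and the variable `y_i`
(for `i ∈ {1,…,n}`) to `a b^{k+i} a`. -/
def sub2 {A : Type*} (a b : A) (n k : ℕ) : FreeMonoid (A ⊕ Fin n) →* FreeMonoid A :=
  FreeMonoid.lift (Sum.elim (fun c => FreeMonoid.of c)
    (fun i : Fin n =>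
      FreeMonoid.of a * (FreeMonoid.of b) ^ (k + i.val + 1) * FreeMonoid.of a))

section aux
variable {A : Type*} (a b : A) (n k : ℕ)

/-- the letter images as lists -/
def sub2f : A ⊕ Fin n → List A :=
  Sum.elim (fun c => [c]) (fun i => a :: (List.replicate (k + i.val + 1) b ++ [a]))

lemma toList_pow (x : A) (m : ℕ) :
    FreeMonoid.toList ((FreeMonoid.of x) ^ m) = List.replicate m x := by
  induction m with
  | zero => rfl
  | succ m ih => rw [pow_succ']; simp [ih, List.replicate_succ]

lemma toList_sub2_of (x : A ⊕ Fin n) :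
    FreeMonoid.toList (sub2 a b n k (FreeMonoid.of x)) = sub2f a b n k x := by
  cases x with
  | inl c => simp [sub2, sub2f]
  | inr i =>
    simp only [sub2, sub2f, FreeMonoid.lift_eval_of, Sum.elim_inr, FreeMonoid.toList_mul,
      toList_pow, FreeMonoid.toList_of]
    simp

lemma toList_sub2 (L : List (A ⊕ Fin n)) :
    FreeMonoid.toList (sub2 a b n k (FreeMonoid.ofList L))
      = (L.map (sub2f a b n k)).flatten := by
  induction L with
  | nil => rfl
  | cons x L ih =>
    have hx : FreeMonoid.ofList (x :: L) = FreeMonoid.of x * FreeMonoid.ofList L := rfl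
    rw [hx, map_mul, FreeMonoid.toList_mul, ih, toList_sub2_of, List.map_cons,
      List.flatten_cons]

lemma repl_prefix (x : A) {m m' : ℕ} (h : m ≤ m') :
    List.replicate m x <+: List.replicate m' x :=
  ⟨List.replicate (m' - m) x, by rw [← List.replicate_add]; congr 1; omega⟩

/-- a long run of `b`s is not a prefix of the image of a short word -/
lemma no_long_b_run (hab : a ≠ b) : ∀ (L : List (A ⊕ Fin n)),
    ¬ List.replicate (L.length + 1) b <+: (L.map (sub2f a b n k)).flatten := by
  intro L
  induction L with
  | nil => simp [List.replicate_succ]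
  | cons x L ih =>
    intro h
    cases x with
    | inl c =>
      rw [List.map_cons, List.flatten_cons] at h
      simp only [sub2f, Sum.elim_inl, List.length_cons] at h
      rw [List.replicate_succ] at h
      rcases h with ⟨t, ht⟩
      simp only [List.cons_append, List.singleton_append, List.cons.injEq] at ht
      exact ih ⟨t, ht.2⟩
    | inr i =>
      rw [List.map_cons, List.flatten_cons] at h
      simp only [sub2f, Sum.elim_inr, List.length_cons] at h
      rw [List.replicate_succ] at h
      rcases h with ⟨t, ht⟩
      simp only [List.cons_append, List.cons.injEq] at ht
      exact hab ht.1.symm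

lemma run_eq (hab : a ≠ b) : ∀ (m m' : ℕ) (s t : List A),
    List.replicate m b ++ a :: s = List.replicate m' b ++ a :: t → m = m' ∧ s = t := by
  intro m
  induction m with
  | zero =>
    intro m' s t h
    cases m' with
    | zero => simpa using h
    | succ m' =>
      rw [List.replicate_succ] at h
      simp only [List.replicate_zero, List.nil_append, List.cons_append, List.cons.injEq] at h
      exact absurd h.1 hab
  | succ m ih =>
    intro m' s t h
    cases m' with
    | zero =>
      rw [List.replicate_succ] at h
      simp only [List.replicate_zero, List.nil_append, List.cons_append, List.cons.injEq] at h
      exact absurd h.1.symm hab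
    | succ m' =>
      rw [List.replicate_succ, List.replicate_succ] at h
      simp only [List.cons_append, List.cons.injEq] at h
      obtain ⟨h1, h2⟩ := ih m' s t h.2
      exact ⟨by omega, h2⟩

lemma main_lemma (hab : a ≠ b) : ∀ (L M : List (A ⊕ Fin n)), L.length + M.length < k →
    (L.map (sub2f a b n k)).flatten = (M.map (sub2f a b n k)).flatten → L = M := by
  intro L
  induction L with
  | nil =>
    intro M _ h
    cases M with
    | nil => rfl
    | cons y M =>
      exfalso
      rw [List.map_cons, List.flatten_cons] at h
      cases y with
      | inl c => simp [sub2f] at h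
      | inr i => simp [sub2f] at h
  | cons x L ih =>
    intro M hlen h
    cases M with
    | nil =>
      exfalso
      rw [List.map_cons, List.flatten_cons] at h
      cases x with
      | inl c => simp [sub2f] at h
      | inr i => simp [sub2f] at h
    | cons y M =>
      rw [List.map_cons, List.flatten_cons, List.map_cons, List.flatten_cons] at h
      simp only [List.length_cons] at hlen
      cases x with
      | inl c =>
        cases y with
        | inl c' =>
          simp only [sub2f, Sum.elim_inl, List.singleton_append, List.cons.injEq] at h
          rw [h.1, ih M (by omega) h.2]
        | inr i =>
          exfalso
          simp only [sub2f, Sum.elim_inl, Sum.elim_inr, List.singleton_append,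
            List.cons_append, List.nil_append, List.cons.injEq] at h
          apply no_long_b_run a b n k hab L
          simp only [sub2f]
          rw [h.2]
          have hle : L.length + 1 ≤ k + i.val + 1 := by omega
          exact (repl_prefix b hle).trans
            ((List.prefix_append _ _).trans (by rw [List.append_assoc]))
      | inr i =>
        cases y with
        | inl c' =>
          exfalso
          simp only [sub2f, Sum.elim_inl, Sum.elim_inr, List.singleton_append,
            List.cons_append, List.nil_append, List.cons.injEq] at h
          apply no_long_b_run a b n k hab M
          simp only [sub2f]
          rw [← h.2]
          have hle : M.length + 1 ≤ k + i.val + 1 := by omega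
          exact (repl_prefix b hle).trans
            ((List.prefix_append _ _).trans (by rw [List.append_assoc]))
        | inr i' =>
          simp only [sub2f, Sum.elim_inr, List.cons_append, List.cons.injEq,
            List.append_assoc, List.singleton_append] at h
          obtain ⟨hm, hs⟩ := run_eq a b hab _ _ _ _ h.2
          have hii : i = i' := Fin.ext (by omega)
          rw [hii, ih M (by omega) hs]

end aux

/-- If `k > |U| + |V|`, then the equation `U = V` is satisfied by the substitution
`y_i ↦ a b^{k+i} a` iff `U` and `V` coincide. -/
theorem stmt2 {A : Type*} (a b : A) (hab : a ≠ b) (n k : ℕ)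
    (U V : FreeMonoid (A ⊕ Fin n))
    (hk : (FreeMonoid.toList U).length + (FreeMonoid.toList V).length < k) :
    sub2 a b n k U = sub2 a b n k V ↔ U = V := by
  constructor
  · intro h
    have h1 : FreeMonoid.toList (sub2 a b n k U) = FreeMonoid.toList (sub2 a b n k V) := by
      rw [h]
    rw [← FreeMonoid.ofList_toList U, ← FreeMonoid.ofList_toList V] at h1 ⊢
    rw [toList_sub2, toList_sub2] at h1
    rw [main_lemma a b n k hab _ _ hk h1]
  · intro h; rw [h]
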